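/- With stability defined by the Hilbert–Mumford numerical criterion: let H = m₁H₁ + … + m_jH_j be a degree-α form written as a product f₁^{m₁}·…·f_j^{m_j} of irreducible forms f_i of degree d_i. If there exist rational numbers α_i with Σ m_iα_i < α/(n+1) (resp. ≤) and, for every one-parameter subgroup λ, ω(f_i,λ)/A_λ ≤ α_i, then H is GIT stable (resp. semistable). -/

import Mathlib

open MvPolynomial

/-- The linear weight of an exponent vector: w(I) = Σ_l c_l · i_l. -/
def wt {n : ℕ} (c : Fin n → ℤ) (I : Fin n →₀ ℕ) : ℤ := ∑ l, c l * (I l : ℤ)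

/-- ω(f) = min of w over exponent vectors of monomials with nonzero coefficient
(junk value 0 for f = 0). -/
noncomputable def omega {K : Type*} [CommSemiring K] {n : ℕ} (c : Fin n → ℤ)
    (f : MvPolynomial (Fin n) K) : ℤ :=
  ((f.support.image (wt c)).min).untopD 0

/-- ω of a linear system given by generators f: the minimum of Σ_j w(I_j) over tuples of
exponent vectors whose Plücker coordinate (coefficient determinant) is nonzero. -/
noncomputable def omegaW {K : Type*} [CommRing K] {n : ℕ} {ι : Type*} [Fintype ι]
    [DecidableEq ι] (c : Fin n → ℤ) (f : ι → MvPolynomial (Fin n) K) : ℤ :=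
  sInf { s : ℤ | ∃ I : ι → (Fin n →₀ ℕ),
    (Matrix.of fun j i => MvPolynomial.coeff (I i) (f j)).det ≠ 0 ∧ s = ∑ j, wt c (I j) }


/-- A normalized one-parameter subgroup of SL(n+1): integer weights
a₀ ≥ a₁ ≥ ... ≥ aₙ with Σ aₗ = 0 and a₀ > 0. -/
def Normalized {n : ℕ} (a : Fin (n+1) → ℤ) : Prop :=
  Antitone a ∧ (∑ l, a l) = 0 ∧ 0 < a 0

/-- The normalization factor A_λ = Σ_{l=0}^{n-1} (a_l - a_n). -/
def Aof {n : ℕ} (a : Fin (n+1) → ℤ) : ℤ :=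
  ∑ l : Fin n, (a l.castSucc - a (Fin.last n))

/-- The shifted weights a_l - a_n used in the tilde weights. -/
def cOf {n : ℕ} (a : Fin (n+1) → ℤ) : Fin (n+1) → ℤ :=
  fun l => a l - a (Fin.last n)

/-- A degree-e form g in n+1 variables is GIT stable iff ω(g,λ)/A_λ < e/(n+1) for every
normalized one-parameter subgroup λ. -/
def FormStable {K : Type*} [CommSemiring K] (n : ℕ) (e : ℚ)
    (g : MvPolynomial (Fin (n+1)) K) : Prop :=
  ∀ a : Fin (n+1) → ℤ, Normalized a →
    (omega (cOf a) g : ℚ) / (Aof a : ℚ) < e / (n + 1)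

/-- A degree-e form g in n+1 variables is GIT semistable iff ω(g,λ)/A_λ ≤ e/(n+1) for every
normalized one-parameter subgroup λ. -/
def FormSemistable {K : Type*} [CommSemiring K] (n : ℕ) (e : ℚ)
    (g : MvPolynomial (Fin (n+1)) K) : Prop :=
  ∀ a : Fin (n+1) → ℤ, Normalized a →
    (omega (cOf a) g : ℚ) / (Aof a : ℚ) ≤ e / (n + 1)

section Aux

variable {K : Type*} [Field K] {N : ℕ} (c : Fin N → ℤ)

lemma wt_add (I J : Fin N →₀ ℕ) : wt c (I + J) = wt c I + wt c J := by
  simp [wt, mul_add, Finset.sum_add_distrib]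

lemma wt_zero : wt c (0 : Fin N →₀ ℕ) = 0 := by simp [wt]

/-- the key used to break ties -/
noncomputable def key : (Fin N →₀ ℕ) → ℤ ×ₗ Lex (Fin N →₀ ℕ) :=
  fun s => toLex (wt c s, toLex s)

lemma key_add (u v : Fin N →₀ ℕ) : key c (u + v) = key c u + key c v := by
  simp only [key, wt_add]; rfl

lemma key_inj : Function.Injective (key c) := by
  intro u v h
  have := congrArg (fun x => (ofLex x).2) h
  exact toLex.injective this

lemma wt_le_of_key_le {u v : Fin N →₀ ℕ} (h : key c u ≤ key c v) : wt c u ≤ wt c v := by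
  simp only [key] at h
  rcases (Prod.Lex.le_iff).mp h with h | h
  · exact le_of_lt h
  · exact le_of_eq h.1

variable {f g : MvPolynomial (Fin N) K}

lemma omega_eq_min' (hf : f ≠ 0) :
    omega c f =
      (f.support.image (wt c)).min'
        (((MvPolynomial.support_nonempty).mpr hf).image _) := by
  rw [omega, ← Finset.coe_min' (((MvPolynomial.support_nonempty).mpr hf).image (wt c))]
  rfl

lemma omega_le_wt {s : Fin N →₀ ℕ} (hs : s ∈ f.support) : omega c f ≤ wt c s := by
  have hf : f ≠ 0 := by rintro rfl; simp at hs
  rw [omega_eq_min' c hf]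
  exact Finset.min'_le _ _ (Finset.mem_image_of_mem _ hs)

lemma le_omega (hf : f ≠ 0) {mm : ℤ} (h : ∀ s ∈ f.support, mm ≤ wt c s) :
    mm ≤ omega c f := by
  rw [omega_eq_min' c hf]
  apply Finset.le_min'
  intro y hy
  obtain ⟨s, hs, rfl⟩ := Finset.mem_image.mp hy
  exact h s hs

set_option maxHeartbeats 1000000 in
lemma omega_mul (hf : f ≠ 0) (hg : g ≠ 0) :
    omega c (f * g) = omega c f + omega c g := by
  obtain ⟨s₀, hs₀, hsmin⟩ := Finset.exists_min_image f.support (key c)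
    ((MvPolynomial.support_nonempty).mpr hf)
  obtain ⟨t₀, ht₀, htmin⟩ := Finset.exists_min_image g.support (key c)
    ((MvPolynomial.support_nonempty).mpr hg)
  have hwf : omega c f = wt c s₀ := by
    refine le_antisymm (omega_le_wt c hs₀) (le_omega c hf ?_)
    exact fun s hs => wt_le_of_key_le c (hsmin s hs)
  have hwg : omega c g = wt c t₀ := by
    refine le_antisymm (omega_le_wt c ht₀) (le_omega c hg ?_)
    exact fun s hs => wt_le_of_key_le c (htmin s hs)
  have hcoeff : MvPolynomial.coeff (s₀ + t₀) (f * g) =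
      MvPolynomial.coeff s₀ f * MvPolynomial.coeff t₀ g := by
    rw [MvPolynomial.coeff_mul]
    rw [Finset.sum_eq_single (s₀, t₀)]
    · intro b hb hne
      by_contra hcb
      have hu : b.1 ∈ f.support := by
        simp only [MvPolynomial.mem_support_iff]
        intro h0; apply hcb; rw [h0, zero_mul]
      have hv : b.2 ∈ g.support := by
        simp only [MvPolynomial.mem_support_iff]
        intro h0; apply hcb; rw [h0, mul_zero]
      have hsum : b.1 + b.2 = s₀ + t₀ := Finset.HasAntidiagonal.mem_antidiagonal.mp hb
      have hkey : key c b.1 + key c b.2 = key c s₀ + key c t₀ := by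
        rw [← key_add, ← key_add, hsum]
      have h1 : key c s₀ ≤ key c b.1 := hsmin _ hu
      have h2 : key c t₀ ≤ key c b.2 := htmin _ hv
      have hb1 : key c b.1 = key c s₀ := by
        have : key c b.1 + key c t₀ ≤ key c s₀ + key c t₀ := by
          calc key c b.1 + key c t₀ ≤ key c b.1 + key c b.2 := by
                exact add_le_add_right h2 _
            _ = key c s₀ + key c t₀ := hkey
        exact le_antisymm (le_of_add_le_add_right this) h1
      have hb1' : b.1 = s₀ := key_inj c hb1
      have hb2' : b.2 = t₀ := by
        have h3 := hsum
        rw [hb1'] at h3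
        exact add_left_cancel h3
      exact hne (Prod.ext hb1' hb2')
    · intro h
      simp [Finset.HasAntidiagonal.mem_antidiagonal] at h
  have hne : MvPolynomial.coeff (s₀ + t₀) (f * g) ≠ 0 := by
    rw [hcoeff]
    exact mul_ne_zero (MvPolynomial.mem_support_iff.mp hs₀)
      (MvPolynomial.mem_support_iff.mp ht₀)
  have hfg : f * g ≠ 0 := fun h => hne (by rw [h]; simp)
  refine le_antisymm ?_ ?_
  · have := omega_le_wt c (f := f * g) (MvPolynomial.mem_support_iff.mpr hne)
    rw [wt_add] at this
    rw [hwf, hwg]; exact this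
  · apply le_omega c hfg
    intro r hr
    have := MvPolynomial.support_mul f g hr
    rw [Finset.mem_add] at this
    obtain ⟨u, hu, v, hv, rfl⟩ := this
    rw [wt_add]
    exact add_le_add (omega_le_wt c hu) (omega_le_wt c hv)

lemma omega_one : omega c (1 : MvPolynomial (Fin N) K) = 0 := by
  have : (1 : MvPolynomial (Fin N) K).support = {0} := by
    classical
    rw [show (1 : MvPolynomial (Fin N) K) = MvPolynomial.monomial 0 1 from rfl,
      MvPolynomial.support_monomial, if_neg (one_ne_zero)]
  simp [omega, this, wt_zero]

lemma omega_pow (hf : f ≠ 0) (k : ℕ) : omega c (f ^ k) = k * omega c f := by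
  induction k with
  | zero => simp [omega_one]
  | succ k ih =>
    rw [pow_succ, omega_mul c (pow_ne_zero k hf) hf, ih]
    push_cast; ring

lemma omega_prod {ι : Type*} (s : Finset ι) (F : ι → MvPolynomial (Fin N) K)
    (hF : ∀ i ∈ s, F i ≠ 0) :
    omega c (∏ i ∈ s, F i) = ∑ i ∈ s, omega c (F i) := by
  classical
  induction s using Finset.induction with
  | empty => simp [omega_one]
  | @insert a s ha ih =>
    rw [Finset.prod_insert ha, Finset.sum_insert ha,
      omega_mul c (hF a (Finset.mem_insert_self a s))
        (Finset.prod_ne_zero_iff.mpr fun i hi => hF i (Finset.mem_insert_of_mem hi)),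
      ih fun i hi => hF i (Finset.mem_insert_of_mem hi)]

lemma Aof_pos {n : ℕ} {a : Fin (n+1) → ℤ} (ha : Normalized a) : 0 < Aof a := by
  obtain ⟨hanti, hsum, hpos⟩ := ha
  have hlast : a (Fin.last n) < 0 := by
    by_contra h
    push_neg at h
    have hnonneg : ∀ l ∈ Finset.univ, 0 ≤ a l := fun l _ =>
      le_trans h (hanti (Fin.le_last l))
    have : (0 : ℤ) < ∑ l, a l :=
      Finset.sum_pos' hnonneg ⟨0, Finset.mem_univ 0, hpos⟩
    omega
  have hA : Aof a = ∑ l : Fin (n+1), (a l - a (Fin.last n)) := by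
    rw [Fin.sum_univ_castSucc (f := fun l => a l - a (Fin.last n))]
    simp [Aof]
  rw [hA, Finset.sum_sub_distrib, hsum, Finset.sum_const, Finset.card_univ,
    Fintype.card_fin]
  rw [nsmul_eq_mul]
  push_cast
  nlinarith [hlast, (show (0:ℤ) ≤ (n:ℤ) by positivity)]

end Aux

/-- Partial stability criterion: if H = f₁^{m₁}⋯f_j^{m_j} has degree α, and there are
rationals α_i with Σ m_i α_i < α/(n+1) (resp. ≤) and ω(f_i,λ)/A_λ ≤ α_i for all λ,
then H is GIT stable (resp. semistable). -/
theorem stmt_10 {K : Type*} [Field K] {n j : ℕ}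
    (f : Fin j → MvPolynomial (Fin (n+1)) K) (d m : Fin j → ℕ)
    (hirr : ∀ i, Irreducible (f i)) (hhom : ∀ i, (f i).IsHomogeneous (d i))
    (α : ℕ) (hα : α = ∑ i, m i * d i)
    (αr : Fin j → ℚ)
    (hbound : ∀ i (a : Fin (n+1) → ℤ), Normalized a →
      (omega (cOf a) (f i) : ℚ) / (Aof a : ℚ) ≤ αr i) :
    ((∑ i, (m i : ℚ) * αr i < (α : ℚ) / (n + 1)) →
      FormStable n (α : ℚ) (∏ i, f i ^ m i)) ∧
    ((∑ i, (m i : ℚ) * αr i ≤ (α : ℚ) / (n + 1)) →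
      FormSemistable n (α : ℚ) (∏ i, f i ^ m i)) := by
  have key : ∀ (a : Fin (n+1) → ℤ), Normalized a →
      (omega (cOf a) (∏ i, f i ^ m i) : ℚ) / (Aof a : ℚ) ≤ ∑ i, (m i : ℚ) * αr i := by
    intro a ha
    have hA : 0 < Aof a := Aof_pos ha
    have hAq : (0:ℚ) < (Aof a : ℚ) := by exact_mod_cast hA
    have hprod : omega (cOf a) (∏ i, f i ^ m i) = ∑ i, (m i : ℤ) * omega (cOf a) (f i) := by
      rw [omega_prod (cOf a) Finset.univ (fun i => f i ^ m i)
        (fun i _ => pow_ne_zero _ (hirr i).ne_zero)]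
      exact Finset.sum_congr rfl fun i _ => omega_pow (cOf a) (hirr i).ne_zero (m i)
    rw [div_le_iff₀ hAq]
    have hb : ∀ i, (omega (cOf a) (f i) : ℚ) ≤ αr i * (Aof a : ℚ) := fun i =>
      (div_le_iff₀ hAq).mp (hbound i a ha)
    calc (omega (cOf a) (∏ i, f i ^ m i) : ℚ)
        = ∑ i, (m i : ℚ) * (omega (cOf a) (f i) : ℚ) := by rw [hprod]; push_cast; ring
      _ ≤ ∑ i, (m i : ℚ) * (αr i * (Aof a : ℚ)) :=
          Finset.sum_le_sum fun i _ =>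
            mul_le_mul_of_nonneg_left (hb i) (by positivity)
      _ = (∑ i, (m i : ℚ) * αr i) * (Aof a : ℚ) := by
          rw [Finset.sum_mul]; exact Finset.sum_congr rfl fun i _ => by ring
  constructor
  · intro hlt a ha
    exact lt_of_le_of_lt (key a ha) hlt
  · intro hle a ha
    exact le_trans (key a ha) hle
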